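/- arXiv:0708.1591 — 6 statements merged into one kernel-verified Lean document; each statement's English description precedes it below -/
import Mathlib

section
/- Let A and B be densely defined closed operators on a Hilbert space G with B ⊆ -A* and A ⊆ -B*. Let K be the orthogonal complement of D(B) in D(-A*) with respect to the graph inner product ⟨f,g⟩_{A*} = ⟨f,g⟩ + ⟨A*f, A*g⟩, and K' the orthogonal complement of D(A) in D(-B*) with respect to the graph inner product of B*. Then the restriction of A* to K is a unitary (isometric isomorphism for the graph inner products) from K onto K', with inverse the restriction of B* to K'. -/
open LinearPMap

open scoped LinearPMap

private lemma aux_key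
    {G : Type*} [NormedAddCommGroup G] [InnerProductSpace ℝ G] [CompleteSpace G]
    (A B : G →ₗ.[ℝ] G)
    (hAdense : Dense (A.domain : Set G)) (hBdense : Dense (B.domain : Set G))
    (hBA : B ≤ -A.adjoint) (hAB : A ≤ -B.adjoint)
    (p : G) (hp : p ∈ A.adjoint.domain)
    (hpK : ∀ f ∈ B.domain, ∀ hf : f ∈ A.adjoint.domain,
      (inner ℝ p f : ℝ) + inner ℝ (A.adjoint ⟨p, hp⟩) (A.adjoint ⟨f, hf⟩) = 0) :
    ∃ hq : (A.adjoint ⟨p, hp⟩ : G) ∈ B.adjoint.domain,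
      B.adjoint ⟨A.adjoint ⟨p, hp⟩, hq⟩ = p ∧
      ∀ g ∈ A.domain, ∀ hg : g ∈ B.adjoint.domain,
        (inner ℝ (A.adjoint ⟨p, hp⟩ : G) g : ℝ) +
          inner ℝ (B.adjoint ⟨A.adjoint ⟨p, hp⟩, hq⟩) (B.adjoint ⟨g, hg⟩) = 0 := by
  set u : G := A.adjoint ⟨p, hp⟩ with hu
  -- key identity : ∀ f : B.domain, ⟪p, f⟫ = ⟪u, B f⟫
  have key : ∀ f : B.domain, (inner ℝ p (f : G) : ℝ) = inner ℝ u (B f) := by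
    intro f
    have hf : (f : G) ∈ A.adjoint.domain := hBA.1 f.2
    have hBf : B f = -(A.adjoint ⟨f, hf⟩) := by
      have := hBA.2 (x := f) (y := ⟨f, hf⟩) rfl
      rw [this, LinearPMap.neg_apply]
    have h0 := hpK f f.2 hf
    rw [hBf, inner_neg_right]
    linarith [h0]
  have hq : u ∈ B.adjoint.domain := by
    apply mem_adjoint_domain_of_exists
    exact ⟨p, fun x => key x⟩
  refine ⟨hq, ?_, ?_⟩
  · exact adjoint_apply_eq hBdense ⟨u, hq⟩ (fun x => key x)
  · intro g hg hg'
    have hBu : B.adjoint ⟨u, hq⟩ = p := adjoint_apply_eq hBdense ⟨u, hq⟩ (fun x => key x)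
    -- B† g = -(A ⟨g, hg⟩) since A ≤ -B†
    have hBg : B.adjoint ⟨g, hg'⟩ = -(A ⟨g, hg⟩) := by
      have := hAB.2 (x := ⟨g, hg⟩) (y := ⟨g, hg'⟩) rfl
      rw [LinearPMap.neg_apply] at this
      rw [this, neg_neg]
    have hform : (inner ℝ (A.adjoint ⟨p, hp⟩) ((⟨g, hg⟩ : A.domain) : G) : ℝ)
        = inner ℝ (p : G) (A ⟨g, hg⟩) :=
      adjoint_isFormalAdjoint hAdense ⟨p, hp⟩ ⟨g, hg⟩
    rw [hBu, hBg, inner_neg_right]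
    rw [← hu] at hform
    rw [hform]
    ring

/-- Let `A`, `B` be densely defined closed operators on a real Hilbert space `G` with
`B ⊆ -A*` and `A ⊆ -B*`.  Let `K` be the orthogonal complement of `D(B)` in `D(-A*)`
with respect to the graph inner product of `A*`, and `K'` the orthogonal complement of
`D(A)` in `D(-B*)` with respect to the graph inner product of `B*`.  Then `A*` restricted
to `K` is a unitary (for the graph inner products) from `K` onto `K'`, whose inverse is
the restriction of `B*` to `K'`. -/
theorem adjoint_restriction_unitary
    {G : Type*} [NormedAddCommGroup G] [InnerProductSpace ℝ G] [CompleteSpace G]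
    (A B : G →ₗ.[ℝ] G)
    (hAdense : Dense (A.domain : Set G)) (hBdense : Dense (B.domain : Set G))
    (hAclosed : A.IsClosed) (hBclosed : B.IsClosed)
    (hBA : B ≤ -A.adjoint) (hAB : A ≤ -B.adjoint)
    -- `K`: the orthocomplement of `D(B)` in `D(A*) = D(-A*)` for the graph inner product of `A*`
    (K : Set G) (hK : K = {p | ∃ hp : p ∈ A.adjoint.domain,
      ∀ f ∈ B.domain, ∀ hf : f ∈ A.adjoint.domain,
        (inner ℝ p f : ℝ) + inner ℝ (A.adjoint ⟨p, hp⟩) (A.adjoint ⟨f, hf⟩) = 0})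
    -- `K'`: the orthocomplement of `D(A)` in `D(B*) = D(-B*)` for the graph inner product of `B*`
    (K' : Set G) (hK' : K' = {q | ∃ hq : q ∈ B.adjoint.domain,
      ∀ g ∈ A.domain, ∀ hg : g ∈ B.adjoint.domain,
        (inner ℝ q g : ℝ) + inner ℝ (B.adjoint ⟨q, hq⟩) (B.adjoint ⟨g, hg⟩) = 0}) :
    -- `A*` maps `K` into `K'` and `B* A* = id` on `K`
    (∀ p, ∀ hp : p ∈ A.adjoint.domain, p ∈ K →
      (A.adjoint ⟨p, hp⟩ : G) ∈ K' ∧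
      ∀ hq : (A.adjoint ⟨p, hp⟩ : G) ∈ B.adjoint.domain,
        B.adjoint ⟨A.adjoint ⟨p, hp⟩, hq⟩ = p) ∧
    -- `B*` maps `K'` into `K` and `A* B* = id` on `K'`
    (∀ q, ∀ hq : q ∈ B.adjoint.domain, q ∈ K' →
      (B.adjoint ⟨q, hq⟩ : G) ∈ K ∧
      ∀ hp : (B.adjoint ⟨q, hq⟩ : G) ∈ A.adjoint.domain,
        A.adjoint ⟨B.adjoint ⟨q, hq⟩, hp⟩ = q) ∧
    -- `A*` is isometric from `K` (graph inner product of `A*`) to `K'` (graph inner product of `B*`)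
    (∀ p₁ p₂, ∀ hp₁ : p₁ ∈ A.adjoint.domain, ∀ hp₂ : p₂ ∈ A.adjoint.domain,
      p₁ ∈ K → p₂ ∈ K →
      ∀ hq₁ : (A.adjoint ⟨p₁, hp₁⟩ : G) ∈ B.adjoint.domain,
      ∀ hq₂ : (A.adjoint ⟨p₂, hp₂⟩ : G) ∈ B.adjoint.domain,
        (inner ℝ (A.adjoint ⟨p₁, hp₁⟩) (A.adjoint ⟨p₂, hp₂⟩) : ℝ) +
          inner ℝ (B.adjoint ⟨A.adjoint ⟨p₁, hp₁⟩, hq₁⟩) (B.adjoint ⟨A.adjoint ⟨p₂, hp₂⟩, hq₂⟩)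
        = (inner ℝ p₁ p₂ : ℝ) + inner ℝ (A.adjoint ⟨p₁, hp₁⟩) (A.adjoint ⟨p₂, hp₂⟩)) := by
  subst hK hK'
  refine ⟨?_, ?_, ?_⟩
  · intro p hp hpK
    obtain ⟨hpK', hpK''⟩ := hpK
    have hpK2 : ∀ f ∈ B.domain, ∀ hf : f ∈ A.adjoint.domain,
        (inner ℝ p f : ℝ) + inner ℝ (A.adjoint ⟨p, hp⟩) (A.adjoint ⟨f, hf⟩) = 0 := by
      intro f hf hf'
      have := hpK'' f hf hf'
      convert this using 3
    obtain ⟨hq, h1, h2⟩ := aux_key A B hAdense hBdense hBA hAB p hp hpK2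
    exact ⟨⟨hq, h2⟩, fun hq' => h1⟩
  · intro q hq hqK'
    obtain ⟨hqK1, hqK2⟩ := hqK'
    have hqK3 : ∀ g ∈ A.domain, ∀ hg : g ∈ B.adjoint.domain,
        (inner ℝ q g : ℝ) + inner ℝ (B.adjoint ⟨q, hq⟩) (B.adjoint ⟨g, hg⟩) = 0 := by
      intro g hg hg'
      have := hqK2 g hg hg'
      convert this using 3
    obtain ⟨hp, h1, h2⟩ := aux_key B A hBdense hAdense hAB hBA q hq hqK3
    exact ⟨⟨hp, fun f hf hf' => h2 f hf hf'⟩, fun hp' => h1⟩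
  · intro p₁ p₂ hp₁ hp₂ hK₁ hK₂ hq₁ hq₂
    obtain ⟨h1, h1'⟩ := hK₁
    obtain ⟨h2, h2'⟩ := hK₂
    have e1 : B.adjoint ⟨A.adjoint ⟨p₁, hp₁⟩, hq₁⟩ = p₁ := by
      obtain ⟨hq, e, -⟩ := aux_key A B hAdense hBdense hBA hAB p₁ hp₁
        (fun f hf hf' => by have := h1' f hf hf'; convert this using 3)
      exact e
    have e2 : B.adjoint ⟨A.adjoint ⟨p₂, hp₂⟩, hq₂⟩ = p₂ := by
      obtain ⟨hq, e, -⟩ := aux_key A B hAdense hBdense hBA hAB p₂ hp₂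
        (fun f hf hf' => by have := h2' f hf hf'; convert this using 3)
      exact e
    rw [e1, e2]
    ring
end

section
/- Let {S_t} and {T_t} be C0-semigroups on a real Hilbert space G with T_t* S_t = I for all t ≥ 0. If {c_t} is a real additive cocycle (c_t ∈ Ker(T_t*), c_{s+t} = c_s + S_s c_t) and {d_t} is an imaginary additive cocycle (d_t ∈ Ker(S_t*), d_{s+t} = d_s + T_s d_t), both weakly measurable in t, then ⟨c_t, d_t⟩ = t·⟨c_1, d_1⟩ for all t > 0. -/
open ContinuousLinearMap

/-- If `(S_t)`, `(T_t)` are C₀-semigroups on a real Hilbert space `G` with `T_t* S_t = I`,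
`(c_t)` is a weakly measurable real additive cocycle (`c_t ∈ Ker T_t*`,
`c_{s+t} = c_s + S_s c_t`) and `(d_t)` a weakly measurable imaginary additive cocycle
(`d_t ∈ Ker S_t*`, `d_{s+t} = d_s + T_s d_t`), then `⟨c_t, d_t⟩ = t ⟨c_1, d_1⟩`. -/
theorem cocycle_pairing_linear
    {G : Type*} [NormedAddCommGroup G] [InnerProductSpace ℝ G] [CompleteSpace G]
    (S T : ℝ → G →L[ℝ] G)
    (hS0 : S 0 = 1) (hT0 : T 0 = 1)
    (hSadd : ∀ s t : ℝ, 0 ≤ s → 0 ≤ t → S (s + t) = S s ∘L S t)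
    (hTadd : ∀ s t : ℝ, 0 ≤ s → 0 ≤ t → T (s + t) = T s ∘L T t)
    (hScont : ∀ x : G, ContinuousOn (fun t => S t x) (Set.Ici 0))
    (hTcont : ∀ x : G, ContinuousOn (fun t => T t x) (Set.Ici 0))
    (hTS : ∀ t : ℝ, 0 ≤ t → (adjoint (T t)) ∘L S t = 1)
    (c d : ℝ → G)
    (hcker : ∀ t : ℝ, 0 < t → adjoint (T t) (c t) = 0)
    (hdker : ∀ t : ℝ, 0 < t → adjoint (S t) (d t) = 0)
    (hccoc : ∀ s t : ℝ, 0 < s → 0 < t → c (s + t) = c s + S s (c t))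
    (hdcoc : ∀ s t : ℝ, 0 < s → 0 < t → d (s + t) = d s + T s (d t))
    (hcmeas : ∀ x : G, Measurable fun t => (inner ℝ (c t) x : ℝ))
    (hdmeas : ∀ x : G, Measurable fun t => (inner ℝ (d t) x : ℝ)) :
    ∀ t : ℝ, 0 < t → (inner ℝ (c t) (d t) : ℝ) = t * inner ℝ (c 1) (d 1) := by
  classical
  -- the pairing function
  set φ : ℝ → ℝ := fun t => (inner ℝ (c t) (d t) : ℝ) with hφdef
  -- key additivity of φ on positive reals
  have hkey : ∀ s t : ℝ, 0 < s → 0 < t → φ (s + t) = φ s + φ t := by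
    intro s t hs ht
    have h1 : (inner ℝ (c s) (T s (d t)) : ℝ) = 0 := by
      rw [← ContinuousLinearMap.adjoint_inner_left, hcker s hs, inner_zero_left]
    have h2 : (inner ℝ (S s (c t)) (d s) : ℝ) = 0 := by
      rw [← ContinuousLinearMap.adjoint_inner_right, hdker s hs, inner_zero_right]
    have h3 : (inner ℝ (S s (c t)) (T s (d t)) : ℝ) = inner ℝ (c t) (d t) := by
      rw [← ContinuousLinearMap.adjoint_inner_left]
      have hA : ContinuousLinearMap.adjoint (T s) (S s (c t)) = c t := by
        have := congrArg (fun A : G →L[ℝ] G => A (c t)) (hTS s hs.le)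
        simpa using this
      rw [hA]
    simp only [hφdef, hccoc s t hs ht, hdcoc s t hs ht, inner_add_left, inner_add_right,
      h1, h2, h3]
    ring
  -- on (0,1), φ has a weakly measurable expression
  have hform : ∀ s : ℝ, 0 < s → s < 1 → φ s = (inner ℝ (c s) (d 1) : ℝ) := by
    intro s hs hs1
    have hd1 : d 1 = d s + T s (d (1 - s)) := by
      have h := hdcoc s (1 - s) hs (by linarith)
      rw [show s + (1 - s) = 1 by ring] at h
      exact h
    rw [hd1, inner_add_right, ← ContinuousLinearMap.adjoint_inner_left, hcker s hs,
      inner_zero_left, add_zero]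
  -- extend φ to an additive function on ℝ
  set F : ℝ → ℝ := fun t => if 0 < t then φ t else if t < 0 then -φ (-t) else 0 with hFdef
  have hFpos : ∀ t : ℝ, 0 < t → F t = φ t := by
    intro t ht; simp [hFdef, ht]
  have hFneg : ∀ t : ℝ, t < 0 → F t = -φ (-t) := by
    intro t ht; simp [hFdef, not_lt.2 ht.le, ht]
  have hF0 : F 0 = 0 := by simp [hFdef]
  have hmix : ∀ s t : ℝ, 0 < s → t < 0 → F (s + t) = F s + F t := by
    intro s t hs ht
    rcases lt_trichotomy 0 (s + t) with h | h | h
    · have hk := hkey (s + t) (-t) h (by linarith)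
      rw [show s + t + -t = s by ring] at hk
      rw [hFpos _ h, hFpos s hs, hFneg t ht]; linarith
    · rw [← h, hF0, hFpos s hs, hFneg t ht, show -t = s by linarith]; ring
    · have hk := hkey s (-(s + t)) hs (by linarith)
      rw [show s + -(s + t) = -t by ring] at hk
      rw [hFneg _ h, hFpos s hs, hFneg t ht]; linarith
  have hFadd : ∀ s t : ℝ, F (s + t) = F s + F t := by
    intro s t
    rcases lt_trichotomy 0 s with hs | hs | hs
    · rcases lt_trichotomy 0 t with ht | ht | ht
      · rw [hFpos _ (by linarith), hFpos s hs, hFpos t ht]; exact hkey s t hs ht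
      · rw [← ht, add_zero, hF0, add_zero]
      · exact hmix s t hs ht
    · rw [← hs, zero_add, hF0, zero_add]
    · rcases lt_trichotomy 0 t with ht | ht | ht
      · rw [add_comm, add_comm (F s)]; exact hmix t s ht hs
      · rw [← ht, add_zero, hF0, add_zero]
      · have hk := hkey (-s) (-t) (by linarith) (by linarith)
        rw [show -s + -t = -(s + t) by ring] at hk
        rw [hFneg _ (by linarith), hFneg s hs, hFneg t ht]; linarith
  set Fhom : ℝ →+ ℝ := AddMonoidHom.mk' F hFadd with hFhom
  have hFrat : ∀ q : ℚ, F (q : ℝ) = (q : ℝ) * F 1 := by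
    intro q
    have h := map_ratCast_smul Fhom ℝ ℝ q (1 : ℝ)
    simpa [smul_eq_mul, Fhom] using h
  -- measurability argument: F is bounded on (0, 1/2)
  set A : ℕ → Set ℝ := fun n => Set.Ioo (0:ℝ) 1 ∩ {s | |(inner ℝ (c s) (d 1) : ℝ)| ≤ n}
    with hAdef
  have hAmeas : ∀ n, MeasurableSet (A n) := by
    intro n
    exact measurableSet_Ioo.inter
      (measurableSet_le (hcmeas (d 1)).abs measurable_const)
  have hAmono : Monotone A := by
    intro n m hnm s hsA
    exact ⟨hsA.1, hsA.2.trans (Nat.cast_le.mpr hnm : (n:ℝ) ≤ m)⟩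
  have hAunion : (⋃ n, A n) = Set.Ioo (0:ℝ) 1 := by
    apply Set.eq_of_subset_of_subset
    · exact Set.iUnion_subset fun n => Set.inter_subset_left
    · intro s hs
      obtain ⟨n, hn⟩ := exists_nat_ge |(inner ℝ (c s) (d 1) : ℝ)|
      exact Set.mem_iUnion.2 ⟨n, hs, hn⟩
  have htend : Filter.Tendsto (fun n => MeasureTheory.volume (A n)) Filter.atTop
      (nhds (MeasureTheory.volume (Set.Ioo (0:ℝ) 1))) := by
    rw [← hAunion]
    exact MeasureTheory.tendsto_measure_iUnion_atTop hAmono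
  have hvol1 : MeasureTheory.volume (Set.Ioo (0:ℝ) 1) = 1 := by
    rw [Real.volume_Ioo]; norm_num
  obtain ⟨n, hAn⟩ : ∃ n, ENNReal.ofReal (3/4) < MeasureTheory.volume (A n) := by
    have hlt : ENNReal.ofReal (3/4) < MeasureTheory.volume (Set.Ioo (0:ℝ) 1) := by
      rw [hvol1, ← ENNReal.ofReal_one]
      exact ENNReal.ofReal_lt_ofReal_iff (by norm_num) |>.2 (by norm_num)
    exact ((tendsto_order.1 htend).1 _ hlt).exists
  have hbound : ∀ x ∈ Set.Ioo (0:ℝ) (1/2), |F x| ≤ 2 * n := by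
    intro x hx
    set B : Set ℝ := (· + x) ⁻¹' A n with hBdef
    have hBmeas : MeasurableSet B := (hAmeas n).preimage (measurable_add_const x)
    have hμB : MeasureTheory.volume B = MeasureTheory.volume (A n) :=
      MeasureTheory.measure_preimage_add_right _ x (A n)
    have hsub : A n ∪ B ⊆ Set.Ioo (-x) 1 := by
      rintro a (ha | ha)
      · exact ⟨by linarith [ha.1.1, hx.1], ha.1.2⟩
      · have h2 : a + x ∈ Set.Ioo (0:ℝ) 1 := ha.1
        exact ⟨by linarith [h2.1], by linarith [h2.2, hx.1]⟩
    have hne : (A n ∩ B).Nonempty := by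
      rw [Set.nonempty_iff_ne_empty]
      intro hemp
      have hdisj : Disjoint (A n) B := Set.disjoint_iff_inter_eq_empty.2 hemp
      have hu : MeasureTheory.volume (A n ∪ B)
          = MeasureTheory.volume (A n) + MeasureTheory.volume B :=
        MeasureTheory.measure_union hdisj hBmeas
      have h1 : MeasureTheory.volume (A n ∪ B) ≤ ENNReal.ofReal (1 + x) := by
        refine le_trans (MeasureTheory.measure_mono hsub) ?_
        rw [Real.volume_Ioo, show (1 : ℝ) - -x = 1 + x by ring]
      have h2 : ENNReal.ofReal (1 + x) < ENNReal.ofReal (3/2) :=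
        ENNReal.ofReal_lt_ofReal_iff (by norm_num) |>.2 (by linarith [hx.2])
      have h3 : ENNReal.ofReal (3/2)
          ≤ MeasureTheory.volume (A n) + MeasureTheory.volume B := by
        rw [show (3/2 : ℝ) = 3/4 + 3/4 by norm_num,
          ENNReal.ofReal_add (by norm_num) (by norm_num)]
        exact le_of_lt (ENNReal.add_lt_add hAn (hμB ▸ hAn))
      have : MeasureTheory.volume (A n ∪ B) < MeasureTheory.volume (A n ∪ B) :=
        lt_of_le_of_lt h1 (lt_of_lt_of_le h2 (hu ▸ h3))
      exact lt_irrefl _ this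
    obtain ⟨a, haA, haB⟩ := hne
    have haB' : a + x ∈ A n := haB
    have e1 : F a = (inner ℝ (c a) (d 1) : ℝ) := by
      rw [hFpos a haA.1.1]; exact hform a haA.1.1 haA.1.2
    have e2 : F (a + x) = (inner ℝ (c (a + x)) (d 1) : ℝ) := by
      rw [hFpos _ haB'.1.1]; exact hform _ haB'.1.1 haB'.1.2
    have hFx : F x = F (a + x) - F a := by
      have := hFadd a x; linarith
    have b1 : -(n:ℝ) ≤ (inner ℝ (c a) (d 1) : ℝ) ∧ (inner ℝ (c a) (d 1) : ℝ) ≤ n :=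
      abs_le.1 haA.2
    have b2 : -(n:ℝ) ≤ (inner ℝ (c (a + x)) (d 1) : ℝ)
        ∧ (inner ℝ (c (a + x)) (d 1) : ℝ) ≤ n := abs_le.1 haB'.2
    rw [hFx, e1, e2]
    exact abs_le.2 ⟨by linarith [b1.1, b1.2, b2.1, b2.2], by linarith [b1.1, b2.2]⟩
  -- the defect function g y = F y - y * F 1 is globally bounded
  set C : ℝ := 2 * n + |F 1| with hCdef
  have hgb : ∀ y : ℝ, |F y - y * F 1| ≤ C := by
    intro y
    obtain ⟨q, hq1, hq2⟩ := exists_rat_btwn (show y - 1/2 < y by linarith)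
    have hyq : y - (q:ℝ) ∈ Set.Ioo (0:ℝ) (1/2) := ⟨by linarith, by linarith⟩
    have hsplit : F y = F (y - q) + F (q:ℝ) := by
      have := hFadd (y - q) (q:ℝ); rw [show y - (q:ℝ) + q = y by ring] at this
      linarith
    have hb := hbound _ hyq
    have habs : |F (y - (q:ℝ))| ≤ 2 * n := hb
    have h1 : F y - y * F 1 = (F (y - q) - (y - q) * F 1) := by
      rw [hsplit, hFrat q]; ring
    rw [h1]
    have h2 : |F (y - (q:ℝ)) - (y - q) * F 1| ≤ |F (y - (q:ℝ))| + |(y - (q:ℝ))| * |F 1| := by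
      calc |F (y - (q:ℝ)) - (y - q) * F 1| ≤ |F (y - (q:ℝ))| + |(y - (q:ℝ)) * F 1| :=
            abs_sub _ _
        _ = |F (y - (q:ℝ))| + |(y - (q:ℝ))| * |F 1| := by rw [abs_mul]
    have h3 : |(y - (q:ℝ))| ≤ 1 := by
      rw [abs_of_pos hyq.1]; linarith [hyq.2]
    have h4 : |(y - (q:ℝ))| * |F 1| ≤ |F 1| := by
      nlinarith [abs_nonneg (F 1), abs_nonneg (y - (q:ℝ))]
    calc |F (y - (q:ℝ)) - (y - q) * F 1| ≤ |F (y - (q:ℝ))| + |(y - (q:ℝ))| * |F 1| := h2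
      _ ≤ 2 * n + |F 1| := add_le_add habs h4
  -- hence the defect vanishes
  have hg0 : ∀ y : ℝ, F y = y * F 1 := by
    intro y
    by_contra hne
    have hpos : 0 < |F y - y * F 1| := abs_pos.2 (sub_ne_zero.2 hne)
    obtain ⟨k, hk⟩ := exists_nat_gt (C / |F y - y * F 1|)
    have hk' : C < (k : ℝ) * |F y - y * F 1| := by
      rw [div_lt_iff₀ hpos] at hk; linarith
    have hFk : F ((k : ℝ) * y) = (k : ℝ) * F y := by
      have := map_nsmul Fhom k y
      simpa [Fhom, nsmul_eq_mul] using this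
    have hb := hgb ((k : ℝ) * y)
    rw [hFk, show (k:ℝ) * F y - (k:ℝ) * y * F 1 = (k:ℝ) * (F y - y * F 1) by ring,
      abs_mul, abs_of_nonneg (Nat.cast_nonneg k : (0:ℝ) ≤ k)] at hb
    linarith
  -- conclude
  intro t ht
  have h1 := hg0 t
  rw [hFpos t ht, hFpos 1 one_pos] at h1
  exact h1
end

section
/- Let {S_t} and {T_t} be C0-semigroups on a real Hilbert space G with T_t* S_t = I. Let c_{a,b} = S_a c_{b-a} and d_{a,b} = T_a d_{b-a} for a real additive cocycle {c_t} and imaginary additive cocycle {d_t}. Then for any finite intervals (s_1,s_2), (t_1,t_2) ⊂ (0,∞), ⟨c_{s_1,s_2}, d_{t_1,t_2}⟩ = ⟨c_1, d_1⟩ · |(s_1,s_2) ∩ (t_1,t_2)|, where |·| denotes Lebesgue measure. -/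
open ContinuousLinearMap

section CauchyAux

open MeasureTheory Pointwise

/-- An additive map `ℝ →+ ℝ` that agrees with a measurable function on `(0,1)` is linear. -/
lemma addHom_eq_mul_of_measurable (f : ℝ →+ ℝ) (g : ℝ → ℝ) (hg : Measurable g)
    (hfg : ∀ x ∈ Set.Ioo (0:ℝ) 1, f x = g x) : ∀ x : ℝ, f x = f 1 * x := by
  have hcontAt : ContinuousAt f 0 := by
    rw [ContinuousAt, map_zero, NormedAddCommGroup.tendsto_nhds_zero]
    intro ε hε
    have hε2 : (0:ℝ) < ε / 2 := by linarith
    set E : ℤ → Set ℝ :=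
      fun n => Set.Ioo (0:ℝ) 1 ∩ g ⁻¹' Set.Ico ((n:ℝ) * (ε/2)) (((n:ℝ)+1) * (ε/2)) with hE
    have hEmeas : ∀ n, MeasurableSet (E n) := fun n =>
      measurableSet_Ioo.inter (hg measurableSet_Ico)
    have hcover : Set.Ioo (0:ℝ) 1 ⊆ ⋃ n, E n := by
      intro x hx
      refine Set.mem_iUnion.2 ⟨⌊g x / (ε/2)⌋, hx, ?_, ?_⟩
      · exact (le_div_iff₀ hε2).1 (Int.floor_le (g x / (ε/2)))
      · exact (div_lt_iff₀ hε2).1 (Int.lt_floor_add_one (g x / (ε/2)))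
    have hex : ∃ n, volume (E n) ≠ 0 := by
      by_contra hcon
      push_neg at hcon
      have h1 : volume (⋃ n, E n) = 0 := measure_iUnion_null hcon
      have h2 : volume (Set.Ioo (0:ℝ) 1) ≤ 0 := h1 ▸ measure_mono hcover
      simp [Real.volume_Ioo] at h2
    obtain ⟨n, hn⟩ := hex
    have hsub : E n - E n ∈ nhds (0:ℝ) :=
      MeasureTheory.Measure.sub_mem_nhds_zero_of_addHaar_pos volume (E n) (hEmeas n)
        (zero_lt_iff.mpr hn)
    filter_upwards [hsub] with z hz
    rcases Set.mem_sub.1 hz with ⟨u, hu, v, hv, rfl⟩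
    have hfz : f (u - v) = g u - g v := by
      rw [map_sub, hfg u hu.1, hfg v hv.1]
    have hkey : ((n:ℝ)+1) * (ε/2) = (n:ℝ) * (ε/2) + ε/2 := by ring
    have hu1 := hu.2.1; have hu2 := hu.2.2
    have hv1 := hv.2.1; have hv2 := hv.2.2
    rw [hfz, Real.norm_eq_abs, abs_sub_lt_iff]
    constructor <;> linarith [hkey]
  have hcont : Continuous f := continuous_of_continuousAt_zero f hcontAt
  intro x
  have h := map_real_smul f hcont x 1
  rw [smul_eq_mul, mul_one, smul_eq_mul] at h
  rw [h, mul_comm]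

/-- A function additive on `(0,∞)` agreeing with a measurable function on `(0,1)` is linear
on `(0,∞)`. -/
lemma additive_pos_linear (φ g : ℝ → ℝ)
    (hadd : ∀ s t : ℝ, 0 < s → 0 < t → φ (s + t) = φ s + φ t)
    (hg : Measurable g) (hfg : ∀ x ∈ Set.Ioo (0:ℝ) 1, φ x = g x) :
    ∀ t : ℝ, 0 < t → φ t = φ 1 * t := by
  have hstep : ∀ u : ℝ, 0 < u → ∀ n : ℕ, φ (u + n) = φ u + n * φ 1 := by
    intro u hu n
    induction n with
    | zero => simp
    | succ k ih =>
      have h1 : u + ((k+1 : ℕ) : ℝ) = (u + k) + 1 := by push_cast; ring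
      rw [h1, hadd (u + k) 1 (by positivity) one_pos, ih]
      push_cast; ring
  have wd : ∀ t : ℝ, ∀ n m : ℕ, 0 < t + n → 0 < t + m →
      φ (t + n) - n * φ 1 = φ (t + m) - m * φ 1 := by
    intro t n m hn hm
    rcases le_total n m with h | h
    · have h1 : t + m = (t + n) + ((m - n : ℕ) : ℝ) := by
        push_cast [h]; ring
      rw [h1, hstep _ hn (m - n)]
      push_cast [h]; ring
    · have h1 : t + n = (t + m) + ((n - m : ℕ) : ℝ) := by
        push_cast [h]; ring
      rw [h1, hstep _ hm (n - m)]
      push_cast [h]; ring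
  set N : ℝ → ℕ := fun t => ⌈-t⌉₊ + 1 with hN
  have hNpos : ∀ t : ℝ, 0 < t + N t := by
    intro t
    have h1 : -t ≤ (⌈-t⌉₊ : ℝ) := Nat.le_ceil _
    have h2 : (N t : ℝ) = (⌈-t⌉₊ : ℝ) + 1 := by rw [hN]; push_cast; ring
    rw [h2]; linarith
  set Φ : ℝ → ℝ := fun t => φ (t + N t) - N t * φ 1 with hΦ
  have hΦadd : ∀ s t : ℝ, Φ (s + t) = Φ s + Φ t := by
    intro s t
    have hcast : ((N s + N t : ℕ) : ℝ) = (N s : ℝ) + N t := by push_cast; ring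
    have h1 : Φ (s + t) = φ ((s + t) + ((N s + N t : ℕ) : ℝ)) - ((N s + N t : ℕ) : ℝ) * φ 1 :=
      wd (s+t) (N (s+t)) (N s + N t) (hNpos _)
        (by rw [hcast]; have := hNpos s; have := hNpos t; linarith)
    have h2 : (s + t) + ((N s + N t : ℕ) : ℝ) = (s + N s) + (t + N t) := by
      rw [hcast]; ring
    rw [h1, h2, hadd (s + N s) (t + N t) (hNpos s) (hNpos t), hΦ]
    simp only
    rw [hcast]; ring
  set F : ℝ →+ ℝ := AddMonoidHom.mk' Φ hΦadd with hF
  have hΦeq : ∀ x : ℝ, 0 < x → Φ x = φ x := by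
    intro x hx
    have h1 : Φ x = φ (x + ((0:ℕ):ℝ)) - ((0:ℕ):ℝ) * φ 1 :=
      wd x (N x) 0 (hNpos x) (by simpa using hx)
    simpa using h1
  have hFg : ∀ x ∈ Set.Ioo (0:ℝ) 1, F x = g x := by
    intro x hx
    show Φ x = g x
    rw [hΦeq x hx.1, hfg x hx]
  have hlin := addHom_eq_mul_of_measurable F g hg hFg
  have hF1 : F 1 = φ 1 := hΦeq 1 one_pos
  intro t ht
  have h1 : φ t = F t := (hΦeq t ht).symm
  rw [h1, hlin t, hF1]

end CauchyAux

/-- With `(S_t)`, `(T_t)` C₀-semigroups on a real Hilbert space `G` satisfying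
`T_t* S_t = I`, a real additive cocycle `(c_t)` and an imaginary additive cocycle `(d_t)`,
set `c_{a,b} = S_a c_{b-a}` and `d_{a,b} = T_a d_{b-a}`.  Then for finite intervals
`(s₁,s₂), (t₁,t₂) ⊂ (0,∞)` one has
`⟨c_{s₁,s₂}, d_{t₁,t₂}⟩ = ⟨c_1, d_1⟩ · |(s₁,s₂) ∩ (t₁,t₂)|`. -/
theorem cocycle_pairing_intervals
    {G : Type*} [NormedAddCommGroup G] [InnerProductSpace ℝ G] [CompleteSpace G]
    (S T : ℝ → G →L[ℝ] G)
    (hS0 : S 0 = 1) (hT0 : T 0 = 1)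
    (hSadd : ∀ s t : ℝ, 0 ≤ s → 0 ≤ t → S (s + t) = S s ∘L S t)
    (hTadd : ∀ s t : ℝ, 0 ≤ s → 0 ≤ t → T (s + t) = T s ∘L T t)
    (hScont : ∀ x : G, ContinuousOn (fun t => S t x) (Set.Ici 0))
    (hTcont : ∀ x : G, ContinuousOn (fun t => T t x) (Set.Ici 0))
    (hTS : ∀ t : ℝ, 0 ≤ t → (adjoint (T t)) ∘L S t = 1)
    (c d : ℝ → G)
    (hcker : ∀ t : ℝ, 0 < t → adjoint (T t) (c t) = 0)
    (hdker : ∀ t : ℝ, 0 < t → adjoint (S t) (d t) = 0)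
    (hccoc : ∀ s t : ℝ, 0 < s → 0 < t → c (s + t) = c s + S s (c t))
    (hdcoc : ∀ s t : ℝ, 0 < s → 0 < t → d (s + t) = d s + T s (d t))
    (hcmeas : ∀ x : G, Measurable fun t => (inner ℝ (c t) x : ℝ))
    (hdmeas : ∀ x : G, Measurable fun t => (inner ℝ (d t) x : ℝ)) :
    ∀ s₁ s₂ t₁ t₂ : ℝ, 0 ≤ s₁ → s₁ < s₂ → 0 ≤ t₁ → t₁ < t₂ →
      (inner ℝ (S s₁ (c (s₂ - s₁))) (T t₁ (d (t₂ - t₁))) : ℝ) =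
        (inner ℝ (c 1) (d 1) : ℝ) *
          (MeasureTheory.volume (Set.Ioo s₁ s₂ ∩ Set.Ioo t₁ t₂)).toReal := by
  -- pointwise versions of the intertwining relations
  have hTSapp : ∀ t : ℝ, 0 ≤ t → ∀ u : G, adjoint (T t) (S t u) = u := by
    intro t ht u
    have h := congrArg (fun A : G →L[ℝ] G => A u) (hTS t ht)
    simpa using h
  have hSTapp : ∀ t : ℝ, 0 ≤ t → ∀ u : G, adjoint (S t) (T t u) = u := by
    intro t ht u
    have h : adjoint ((adjoint (T t)) ∘L S t) = adjoint (1 : G →L[ℝ] G) := by rw [hTS t ht]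
    rw [adjoint_comp, adjoint_adjoint] at h
    have h1 : adjoint (1 : G →L[ℝ] G) = (1 : G →L[ℝ] G) := by
      rw [ContinuousLinearMap.one_def, adjoint_id]
    rw [h1] at h
    have h2 := congrArg (fun A : G →L[ℝ] G => A u) h
    simpa using h2
  have hpair : ∀ r : ℝ, 0 ≤ r → ∀ u v : G,
      (inner ℝ (S r u) (T r v) : ℝ) = inner ℝ u v := by
    intro r hr u v
    rw [← ContinuousLinearMap.adjoint_inner_left (T r) v (S r u), hTSapp r hr u]
  have hzero_c : ∀ r : ℝ, 0 < r → ∀ v : G, (inner ℝ (c r) (T r v) : ℝ) = 0 := by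
    intro r hr v
    rw [← ContinuousLinearMap.adjoint_inner_left (T r) v (c r), hcker r hr, inner_zero_left]
  have hzero_d : ∀ r : ℝ, 0 < r → ∀ u : G, (inner ℝ (S r u) (d r) : ℝ) = 0 := by
    intro r hr u
    rw [← ContinuousLinearMap.adjoint_inner_right (S r) u (d r), hdker r hr, inner_zero_right]
  -- the diagonal function is linear
  have key : ∀ r : ℝ, 0 < r →
      (inner ℝ (c r) (d r) : ℝ) = (inner ℝ (c 1) (d 1) : ℝ) * r := by
    set φ : ℝ → ℝ := fun r => (inner ℝ (c r) (d r) : ℝ) with hφ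
    have hadd : ∀ s t : ℝ, 0 < s → 0 < t → φ (s + t) = φ s + φ t := by
      intro s t hs ht
      show (inner ℝ (c (s+t)) (d (s+t)) : ℝ) = _
      rw [hccoc s t hs ht, hdcoc s t hs ht, inner_add_left, inner_add_right, inner_add_right,
        hzero_c s hs (d t), hzero_d s hs (c t), hpair s hs.le (c t) (d t)]
      show (inner ℝ (c s) (d s) : ℝ) + 0 + (0 + inner ℝ (c t) (d t)) = _
      rw [hφ]; ring
    have heqg : ∀ x ∈ Set.Ioo (0:ℝ) 1,
        φ x = (fun r => (inner ℝ (c r) (d 1) : ℝ)) x := by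
      intro x hx
      have h1 : d 1 = d x + T x (d (1-x)) := by
        have h := hdcoc x (1-x) hx.1 (by linarith [hx.2])
        rw [show x + (1-x) = 1 by ring] at h
        exact h
      show (inner ℝ (c x) (d x) : ℝ) = inner ℝ (c x) (d 1)
      rw [h1, inner_add_right, hzero_c x hx.1 (d (1-x)), add_zero]
    have hlin := additive_pos_linear φ (fun r => (inner ℝ (c r) (d 1) : ℝ)) hadd
      (hcmeas (d 1)) heqg
    intro r hr
    exact hlin r hr
  -- splitting lemmas
  have hcsplit : ∀ a m b : ℝ, 0 ≤ a → a < m → m < b →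
      S a (c (b - a)) = S a (c (m - a)) + S m (c (b - m)) := by
    intro a m b ha ham hmb
    have h1 : c (b - a) = c (m - a) + S (m - a) (c (b - m)) := by
      have h := hccoc (m - a) (b - m) (by linarith) (by linarith)
      rw [show m - a + (b - m) = b - a by ring] at h
      exact h
    rw [h1, map_add]
    congr 1
    have h2 : S m = S a ∘L S (m - a) := by
      have h := hSadd a (m - a) ha (by linarith)
      rw [show a + (m - a) = m by ring] at h
      exact h
    rw [h2]; rfl
  have hdsplit : ∀ a m b : ℝ, 0 ≤ a → a < m → m < b →
      T a (d (b - a)) = T a (d (m - a)) + T m (d (b - m)) := by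
    intro a m b ha ham hmb
    have h1 : d (b - a) = d (m - a) + T (m - a) (d (b - m)) := by
      have h := hdcoc (m - a) (b - m) (by linarith) (by linarith)
      rw [show m - a + (b - m) = b - a by ring] at h
      exact h
    rw [h1, map_add]
    congr 1
    have h2 : T m = T a ∘L T (m - a) := by
      have h := hTadd a (m - a) ha (by linarith)
      rw [show a + (m - a) = m by ring] at h
      exact h
    rw [h2]; rfl
  -- kernel lemmas
  have hker1 : ∀ a b : ℝ, 0 ≤ a → a < b → adjoint (T b) (S a (c (b - a))) = 0 := by
    intro a b ha hab
    have h1 : T b = T a ∘L T (b - a) := by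
      have h := hTadd a (b - a) ha (by linarith)
      rw [show a + (b - a) = b by ring] at h
      exact h
    rw [h1, adjoint_comp]
    show adjoint (T (b - a)) (adjoint (T a) (S a (c (b - a)))) = 0
    rw [hTSapp a ha, hcker (b - a) (by linarith)]
  have hker2 : ∀ x y : ℝ, 0 ≤ x → x < y → adjoint (S y) (T x (d (y - x))) = 0 := by
    intro x y hx hxy
    have h1 : S y = S x ∘L S (y - x) := by
      have h := hSadd x (y - x) hx (by linarith)
      rw [show x + (y - x) = y by ring] at h
      exact h
    rw [h1, adjoint_comp]
    show adjoint (S (y - x)) (adjoint (S x) (T x (d (y - x)))) = 0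
    rw [hSTapp x hx, hdker (y - x) (by linarith)]
  -- disjoint interval pairings vanish
  have hdisj1 : ∀ a b x y : ℝ, 0 ≤ a → a < b → b ≤ x → x < y →
      (inner ℝ (S a (c (b - a))) (T x (d (y - x))) : ℝ) = 0 := by
    intro a b x y ha hab hbx hxy
    have h1 : T x = T b ∘L T (x - b) := by
      have h := hTadd b (x - b) (by linarith) (by linarith)
      rw [show b + (x - b) = x by ring] at h
      exact h
    rw [h1]
    show (inner ℝ (S a (c (b - a))) (T b (T (x - b) (d (y - x)))) : ℝ) = 0
    rw [← ContinuousLinearMap.adjoint_inner_left (T b) (T (x - b) (d (y - x)))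
        (S a (c (b - a))), hker1 a b ha hab, inner_zero_left]
  have hdisj2 : ∀ a b x y : ℝ, 0 ≤ x → x < y → y ≤ a → a < b →
      (inner ℝ (S a (c (b - a))) (T x (d (y - x))) : ℝ) = 0 := by
    intro a b x y hx hxy hya hab
    have h1 : S a = S y ∘L S (a - y) := by
      have h := hSadd y (a - y) (by linarith) (by linarith)
      rw [show y + (a - y) = a by ring] at h
      exact h
    rw [h1]
    show (inner ℝ (S y (S (a - y) (c (b - a)))) (T x (d (y - x))) : ℝ) = 0
    rw [← ContinuousLinearMap.adjoint_inner_right (S y) (S (a - y) (c (b - a)))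
        (T x (d (y - x))), hker2 x y hx hxy, inner_zero_right]
  -- main argument
  intro s₁ s₂ t₁ t₂ hs₁ hs12 ht₁ ht12
  set p : ℝ := max s₁ t₁ with hp
  set q : ℝ := min s₂ t₂ with hq
  have hinter : Set.Ioo s₁ s₂ ∩ Set.Ioo t₁ t₂ = Set.Ioo p q := Set.Ioo_inter_Ioo
  rcases le_or_gt q p with hqp | hpq
  · -- disjoint case
    have hvol : Set.Ioo s₁ s₂ ∩ Set.Ioo t₁ t₂ = ∅ := by
      rw [hinter]
      exact Set.Ioo_eq_empty (not_lt.2 hqp)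
    rw [hvol]
    simp only [MeasureTheory.measure_empty, ENNReal.toReal_zero, mul_zero]
    have hcases : s₂ ≤ t₁ ∨ t₂ ≤ s₁ := by
      by_contra hcon
      push_neg at hcon
      have hlt : p < q := by
        rw [hp, hq]
        exact max_lt (lt_min hs12 hcon.2) (lt_min hcon.1 ht12)
      linarith
    rcases hcases with h | h
    · exact hdisj1 s₁ s₂ t₁ t₂ hs₁ hs12 h ht12
    · exact hdisj2 s₁ s₂ t₁ t₂ ht₁ ht12 h hs12
  · -- overlapping case
    have hp0 : 0 ≤ p := le_trans hs₁ (le_max_left _ _)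
    have hps₂ : p < s₂ := lt_of_lt_of_le hpq (min_le_left _ _)
    have hpt₂ : p < t₂ := lt_of_lt_of_le hpq (min_le_right _ _)
    have hs₁p : s₁ ≤ p := le_max_left _ _
    have ht₁p : t₁ ≤ p := le_max_right _ _
    have hqs₂ : q ≤ s₂ := min_le_left _ _
    have hqt₂ : q ≤ t₂ := min_le_right _ _
    have stepA : (inner ℝ (S s₁ (c (s₂ - s₁))) (T t₁ (d (t₂ - t₁))) : ℝ)
        = inner ℝ (S p (c (s₂ - p))) (T p (d (t₂ - p))) := by
      rcases lt_trichotomy s₁ t₁ with h | h | h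
      · have hpt : p = t₁ := max_eq_right h.le
        have ht₁s₂ : t₁ < s₂ := by rw [← hpt]; exact hps₂
        rw [hpt, hcsplit s₁ t₁ s₂ hs₁ h ht₁s₂, inner_add_left,
          hdisj1 s₁ t₁ t₁ t₂ hs₁ h le_rfl ht12, zero_add]
      · have hps : p = s₁ := by rw [hp, h, max_self]
        rw [hps, ← h]
      · have hps : p = s₁ := max_eq_left h.le
        have hs₁t₂ : s₁ < t₂ := by rw [← hps]; exact hpt₂
        rw [hps, hdsplit t₁ s₁ t₂ ht₁ h hs₁t₂, inner_add_right,
          hdisj2 s₁ s₂ t₁ s₁ ht₁ h le_rfl hs12, zero_add]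
    have stepB : (inner ℝ (S p (c (s₂ - p))) (T p (d (t₂ - p))) : ℝ)
        = inner ℝ (S p (c (q - p))) (T p (d (q - p))) := by
      rcases lt_trichotomy s₂ t₂ with h | h | h
      · have hqs : q = s₂ := min_eq_left h.le
        rw [hqs, hdsplit p s₂ t₂ hp0 hps₂ h, inner_add_right,
          hdisj1 p s₂ s₂ t₂ hp0 hps₂ le_rfl h, add_zero]
      · have hqs : q = s₂ := by rw [hq, h, min_self]
        rw [hqs, ← h]
      · have hqt : q = t₂ := min_eq_right h.le
        rw [hqt, hcsplit p t₂ s₂ hp0 hpt₂ h, inner_add_left,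
          hdisj2 t₂ s₂ p t₂ hp0 hpt₂ le_rfl h, add_zero]
    have hfinal : (inner ℝ (S p (c (q - p))) (T p (d (q - p))) : ℝ)
        = (inner ℝ (c 1) (d 1) : ℝ) * (q - p) := by
      rw [hpair p hp0 (c (q - p)) (d (q - p)), key (q - p) (by linarith)]
    have hvol : (MeasureTheory.volume (Set.Ioo s₁ s₂ ∩ Set.Ioo t₁ t₂)).toReal = q - p := by
      rw [hinter, Real.volume_Ioo, ENNReal.toReal_ofReal (by linarith)]
    rw [stepA, stepB, hfinal, hvol]
end

section
/- Let (w, K) be a continuous unitary representation of a real Hilbert space G (as additive group) on a complex Hilbert space K which does not contain the trivial representation, and let c: G → K be a continuous 1-cocycle, i.e., c(r+s) = c(r) + w(r)c(s) for all r, s ∈ G. Then for all r, s ∈ G: ⟨c(r), w(r)c(s)⟩ = ⟨c(s), w(s)c(r)⟩. -/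
open ContinuousLinearMap

section ErgodicAux

open Filter Finset Topology

variable {K : Type*} [NormedAddCommGroup K] [InnerProductSpace ℂ K] [CompleteSpace K]

/-- The ergodic average `(1/n) ∑_{k<n} W^k`. -/
noncomputable def ergAvg (W : K →L[ℂ] K) (n : ℕ) : K →L[ℂ] K :=
  (n : ℂ)⁻¹ • ∑ k ∈ Finset.range n, W ^ k

lemma ergAvg_apply (W : K →L[ℂ] K) (n : ℕ) (z : K) :
    ergAvg W n z = (n : ℂ)⁻¹ • ∑ k ∈ Finset.range n, (W ^ k) z := by
  simp [ergAvg, ContinuousLinearMap.sum_apply]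

lemma pow_iso {W : K →L[ℂ] K} (hiso : ∀ z, ‖W z‖ = ‖z‖) (k : ℕ) (z : K) :
    ‖(W ^ k) z‖ = ‖z‖ := by
  induction k generalizing z with
  | zero => simp
  | succ k ih =>
    rw [pow_succ, ContinuousLinearMap.mul_apply, ih (W z), hiso]

lemma ergAvg_norm_le {W : K →L[ℂ] K} (hiso : ∀ z, ‖W z‖ = ‖z‖) {n : ℕ} (hn : 1 ≤ n) (z : K) :
    ‖ergAvg W n z‖ ≤ ‖z‖ := by
  have hn0 : (0:ℝ) < (n:ℝ) := by exact_mod_cast hn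
  rw [ergAvg_apply, norm_smul]
  have h1 : ‖∑ k ∈ Finset.range n, (W ^ k) z‖ ≤ (n:ℝ) * ‖z‖ := by
    calc ‖∑ k ∈ Finset.range n, (W ^ k) z‖ ≤ ∑ k ∈ Finset.range n, ‖(W ^ k) z‖ :=
          norm_sum_le _ _
    _ = (n:ℝ) * ‖z‖ := by simp only [pow_iso hiso, Finset.sum_const, Finset.card_range, nsmul_eq_mul]
  have h2 : ‖((n:ℂ))⁻¹‖ = ((n:ℝ))⁻¹ := by
    rw [norm_inv]; norm_num
  rw [h2]
  calc ((n:ℝ))⁻¹ * ‖∑ k ∈ Finset.range n, (W ^ k) z‖ ≤ ((n:ℝ))⁻¹ * ((n:ℝ) * ‖z‖) := by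
        apply mul_le_mul_of_nonneg_left h1 (by positivity)
  _ = ‖z‖ := by field_simp

lemma ergAvg_tel (W : K →L[ℂ] K) (n : ℕ) (u : K) :
    ergAvg W n (W u - u) = (n : ℂ)⁻¹ • ((W ^ n) u - u) := by
  rw [ergAvg_apply]
  congr 1
  have h : ∀ k, (W ^ k) (W u - u) = (W ^ (k+1)) u - (W ^ k) u := by
    intro k
    rw [map_sub, pow_succ, ContinuousLinearMap.mul_apply]
  calc ∑ k ∈ Finset.range n, (W ^ k) (W u - u)
      = ∑ k ∈ Finset.range n, ((W ^ (k+1)) u - (W ^ k) u) := by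
        exact Finset.sum_congr rfl fun k _ => h k
  _ = (W ^ n) u - (W ^ 0) u := Finset.sum_range_sub (fun k => (W ^ k) u) n
  _ = (W ^ n) u - u := by simp

lemma ergAvg_tel_norm {W : K →L[ℂ] K} (hiso : ∀ z, ‖W z‖ = ‖z‖) {n : ℕ} (hn : 1 ≤ n) (u : K) :
    ‖ergAvg W n (W u - u)‖ ≤ 2 * ‖u‖ / n := by
  have hn0 : (0:ℝ) < (n:ℝ) := by exact_mod_cast hn
  rw [ergAvg_tel, norm_smul]
  have h2 : ‖((n:ℂ))⁻¹‖ = ((n:ℝ))⁻¹ := by rw [norm_inv]; norm_num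
  rw [h2]
  have h3 : ‖(W ^ n) u - u‖ ≤ 2 * ‖u‖ := by
    calc ‖(W ^ n) u - u‖ ≤ ‖(W ^ n) u‖ + ‖u‖ := norm_sub_le _ _
    _ = 2 * ‖u‖ := by rw [pow_iso hiso]; ring
  calc ((n:ℝ))⁻¹ * ‖(W ^ n) u - u‖ ≤ ((n:ℝ))⁻¹ * (2 * ‖u‖) :=
        mul_le_mul_of_nonneg_left h3 (by positivity)
  _ = 2 * ‖u‖ / n := by ring

lemma ergAvg_fixed {W : K →L[ℂ] K} {z : K} (hz : W z = z) {n : ℕ} (hn : 1 ≤ n) :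
    ergAvg W n z = z := by
  have hn0 : ((n:ℂ)) ≠ 0 := by exact Nat.cast_ne_zero.mpr (by omega)
  have hk : ∀ k, (W ^ k) z = z := by
    intro k
    induction k with
    | zero => simp
    | succ k ih => rw [pow_succ, ContinuousLinearMap.mul_apply, hz, ih]
  rw [ergAvg_apply]
  have : ∑ k ∈ Finset.range n, (W ^ k) z = (n : ℕ) • z := by
    rw [Finset.sum_congr rfl fun k _ => hk k, Finset.sum_const, Finset.card_range]
  rw [this, ← Nat.cast_smul_eq_nsmul ℂ, smul_smul, inv_mul_cancel₀ hn0, one_smul]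

lemma ergAvg_comm {W A : K →L[ℂ] K} (h : ∀ z, A (W z) = W (A z)) (n : ℕ) (z : K) :
    A (ergAvg W n z) = ergAvg W n (A z) := by
  have hk : ∀ (k : ℕ) (v : K), A ((W ^ k) v) = (W ^ k) (A v) := by
    intro k
    induction k with
    | zero => intro v; simp
    | succ k ih =>
      intro v
      rw [pow_succ, ContinuousLinearMap.mul_apply, ContinuousLinearMap.mul_apply, ih, h]
  rw [ergAvg_apply, ergAvg_apply, map_smul, map_sum]
  congr 1
  exact Finset.sum_congr rfl fun k _ => hk k z

lemma unit_inner (W : K →L[ℂ] K) (h1 : adjoint W ∘L W = 1) (a b : K) :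
    (inner ℂ (W a) (W b) : ℂ) = inner ℂ a b := by
  have hv : (adjoint W) (W b) = b := by
    rw [← ContinuousLinearMap.comp_apply, h1, ContinuousLinearMap.one_apply]
  calc (inner ℂ (W a) (W b) : ℂ) = inner ℂ a ((adjoint W) (W b)) :=
        (ContinuousLinearMap.adjoint_inner_right W a (W b)).symm
  _ = inner ℂ a b := by rw [hv]

lemma unit_norm (W : K →L[ℂ] K) (h1 : adjoint W ∘L W = 1) (v : K) : ‖W v‖ = ‖v‖ := by
  have h := unit_inner W h1 v v
  rw [inner_self_eq_norm_sq_to_K (W v), inner_self_eq_norm_sq_to_K v] at h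
  have h2 : (‖W v‖ : ℝ)^2 = (‖v‖ : ℝ)^2 := by exact_mod_cast h
  rw [← Real.sqrt_sq (norm_nonneg (W v)), ← Real.sqrt_sq (norm_nonneg v), h2]

/-- The mean ergodic theorem for a unitary operator on a complex Hilbert space. -/
lemma merg (W : K →L[ℂ] K) (h1 : adjoint W ∘L W = 1) (h2 : W ∘L adjoint W = 1) (z : K) :
    ∃ p, Filter.Tendsto (fun n => ergAvg W n z) Filter.atTop (𝓝 p) := by
  have hiso : ∀ v : K, ‖W v‖ = ‖v‖ := unit_norm W h1
  set A : K →L[ℂ] K := W - 1 with hA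
  set S : Submodule ℂ K := LinearMap.ker (A : K →ₗ[ℂ] K) with hS
  have hclosed : IsClosed (S : Set K) := ContinuousLinearMap.isClosed_ker A
  haveI : CompleteSpace S := hclosed.completeSpace_coe
  have h3 : (LinearMap.range (A : K →ₗ[ℂ] K))ᗮ = LinearMap.ker (adjoint A : K →ₗ[ℂ] K) := by
    ext v
    constructor
    · intro hv
      have h4 : ∀ u : K, (inner ℂ u ((adjoint A) v) : ℂ) = 0 := by
        intro u
        rw [ContinuousLinearMap.adjoint_inner_right]
        exact (Submodule.mem_orthogonal _ v).mp hv (A u) ⟨u, rfl⟩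
      exact LinearMap.mem_ker.mpr (inner_self_eq_zero.mp (h4 ((adjoint A) v)))
    · intro hv
      rw [Submodule.mem_orthogonal]
      rintro u ⟨u', rfl⟩
      rw [ContinuousLinearMap.coe_coe, ← ContinuousLinearMap.adjoint_inner_right, (show (adjoint A) v = 0 from LinearMap.mem_ker.mp hv), inner_zero_right]
  have h5 : LinearMap.ker (adjoint A : K →ₗ[ℂ] K) = S := by
    have hadj : adjoint A = adjoint W - 1 := by
      rw [hA, map_sub, ← star_eq_adjoint (1 : K →L[ℂ] K), star_one]
    ext v
    rw [LinearMap.mem_ker, hadj, hS, LinearMap.mem_ker]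
    rw [ContinuousLinearMap.coe_coe, ContinuousLinearMap.sub_apply, ContinuousLinearMap.one_apply, sub_eq_zero]
    rw [hA, ContinuousLinearMap.coe_coe, ContinuousLinearMap.sub_apply, ContinuousLinearMap.one_apply, sub_eq_zero]
    constructor
    · intro hv
      have hkey : W ((adjoint W) v) = v := by
        rw [← ContinuousLinearMap.comp_apply, h2, ContinuousLinearMap.one_apply]
      rw [hv] at hkey
      exact hkey
    · intro hv
      have hkey : (adjoint W) (W v) = v := by
        rw [← ContinuousLinearMap.comp_apply, h1, ContinuousLinearMap.one_apply]
      rw [hv] at hkey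
      exact hkey
  have horth : Sᗮ = (LinearMap.range (A : K →ₗ[ℂ] K)).topologicalClosure := by
    rw [← h5, ← h3, Submodule.orthogonal_orthogonal_eq_closure]
  obtain ⟨z₁, hz₁, z₂, hz₂, hzeq⟩ := S.exists_add_mem_mem_orthogonal z
  have hWz₁ : W z₁ = z₁ := by
    have := LinearMap.mem_ker.mp hz₁
    rw [hA, ContinuousLinearMap.coe_coe, ContinuousLinearMap.sub_apply, ContinuousLinearMap.one_apply, sub_eq_zero] at this
    exact this
  refine ⟨z₁, ?_⟩
  have key2 : Filter.Tendsto (fun n => ergAvg W n z₂) Filter.atTop (𝓝 0) := by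
    rw [NormedAddCommGroup.tendsto_nhds_zero]
    intro ε hε
    have hz₂' : z₂ ∈ closure (LinearMap.range (A : K →ₗ[ℂ] K) : Set K) := by
      rw [horth] at hz₂
      rw [← Submodule.topologicalClosure_coe]
      exact hz₂
    rw [Metric.mem_closure_iff] at hz₂'
    obtain ⟨v, hvmem, hvdist⟩ := hz₂' (ε/2) (by positivity)
    obtain ⟨u, rfl⟩ := hvmem
    have hlim : Filter.Tendsto (fun n : ℕ => 2 * ‖u‖ / n) Filter.atTop (𝓝 0) :=
      tendsto_const_div_atTop_nhds_zero_nat (2 * ‖u‖)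
    filter_upwards [Filter.eventually_ge_atTop 1,
      hlim.eventually (gt_mem_nhds (half_pos hε))] with n hn1 hn2
    have hAu : A u = W u - u := by
      rw [hA, ContinuousLinearMap.sub_apply, ContinuousLinearMap.one_apply]
    calc ‖ergAvg W n z₂‖ = ‖ergAvg W n (z₂ - A u) + ergAvg W n (A u)‖ := by
          rw [← map_add, sub_add_cancel]
    _ ≤ ‖ergAvg W n (z₂ - A u)‖ + ‖ergAvg W n (A u)‖ := norm_add_le _ _
    _ ≤ ‖z₂ - A u‖ + 2 * ‖u‖ / n := by
          refine add_le_add (ergAvg_norm_le hiso hn1 _) ?_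
          rw [hAu]
          exact ergAvg_tel_norm hiso hn1 u
    _ < ε/2 + ε/2 := by
          refine add_lt_add ?_ hn2
          rw [← dist_eq_norm]
          exact hvdist
    _ = ε := add_halves ε
  have hfin : Filter.Tendsto (fun n => z₁ + ergAvg W n z₂) Filter.atTop (𝓝 (z₁ + 0)) :=
    tendsto_const_nhds.add key2
  rw [add_zero] at hfin
  refine Filter.Tendsto.congr' ?_ hfin
  filter_upwards [Filter.eventually_ge_atTop 1] with n hn
  rw [hzeq, map_add, ergAvg_fixed hWz₁ hn]

lemma claimB (U V : K →L[ℂ] K) (hUV : ∀ z, U (V z) = V (U z))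
    (hU : ∀ a b : K, (inner ℂ (U a) (U b) : ℂ) = inner ℂ a b)
    (hV : ∀ a b : K, (inner ℂ (V a) (V b) : ℂ) = inner ℂ a b) (f : K) :
    (inner ℂ (U (f - V f)) (f - U f) : ℂ) = inner ℂ (V (f - U f)) (f - V f) := by
  rw [map_sub, map_sub, inner_sub_left, inner_sub_left, inner_sub_right, inner_sub_right,
    inner_sub_right, inner_sub_right]
  rw [hU f f, hV f f, hU (V f) f, hV (U f) f, hUV f]
  ring

end ErgodicAux

section KeyLim

open Filter Finset Topology

variable {G : Type*} [NormedAddCommGroup G] [InnerProductSpace ℝ G] [CompleteSpace G]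
variable {K : Type*} [NormedAddCommGroup K] [InnerProductSpace ℂ K] [CompleteSpace K]

lemma keylim (w : G → K →L[ℂ] K)
    (hw0 : w 0 = 1)
    (hwadd : ∀ r s : G, w (r + s) = w r ∘L w s)
    (hwunitary : ∀ r : G, (adjoint (w r)) ∘L w r = 1 ∧ w r ∘L (adjoint (w r)) = 1)
    (hnotriv : ∀ f : K, (∀ r : G, w r f = f) → f = 0)
    (c : G → K)
    (hccoc : ∀ r s : G, c (r + s) = c r + w r (c s)) (a b : G) :
    Filter.Tendsto (fun n => ergAvg (w b) n (ergAvg (w a) n (c a))) Filter.atTop (𝓝 0) := by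
  have hkey : ∀ t u : G, c t - w u (c t) = c u - w t (c u) := by
    intro t u
    rw [sub_eq_sub_iff_add_eq_add, ← hccoc t u, ← hccoc u t, add_comm t u]
  have hcommt : ∀ t u : G, ∀ z : K, w t (w u z) = w u (w t z) := by
    intro t u z
    rw [← ContinuousLinearMap.comp_apply, ← ContinuousLinearMap.comp_apply, ← hwadd, ← hwadd,
      add_comm t u]
  have hisoa := unit_norm (w a) (hwunitary a).1
  have hisob := unit_norm (w b) (hwunitary b).1
  obtain ⟨p₁, hp₁⟩ := merg (w a) (hwunitary a).1 (hwunitary a).2 (c a)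
  obtain ⟨p, hp⟩ := merg (w b) (hwunitary b).1 (hwunitary b).2 p₁
  set X : ℕ → K := fun n => ergAvg (w b) n (ergAvg (w a) n (c a)) with hXdef
  have hXp : Filter.Tendsto X Filter.atTop (𝓝 p) := by
    rw [tendsto_iff_norm_sub_tendsto_zero]
    apply squeeze_zero' (Filter.Eventually.of_forall fun n => norm_nonneg _)
      (g := fun n => ‖ergAvg (w a) n (c a) - p₁‖ + ‖ergAvg (w b) n p₁ - p‖)
    · filter_upwards [Filter.eventually_ge_atTop 1] with n hn
      have hXe : X n - p = ergAvg (w b) n (ergAvg (w a) n (c a) - p₁) + (ergAvg (w b) n p₁ - p) := by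
        rw [map_sub, hXdef]
        abel
      rw [hXe]
      refine le_trans (norm_add_le _ _) ?_
      exact add_le_add (ergAvg_norm_le hisob hn _) le_rfl
    · have e1 := tendsto_iff_norm_sub_tendsto_zero.mp hp₁
      have e2 := tendsto_iff_norm_sub_tendsto_zero.mp hp
      simpa using e1.add e2
  have hp0 : p = 0 := by
    apply hnotriv
    intro t
    have h1 : Filter.Tendsto (fun n => w t (X n) - X n) Filter.atTop (𝓝 (w t p - p)) :=
      (((w t).continuous.tendsto p).comp hXp).sub hXp
    have h2 : Filter.Tendsto (fun n => w t (X n) - X n) Filter.atTop (𝓝 0) := by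
      have hid : ∀ n, w t (X n) - X n = ergAvg (w b) n (ergAvg (w a) n (w a (c t) - c t)) := by
        intro n
        have e1 : w t (X n) = ergAvg (w b) n (ergAvg (w a) n (w t (c a))) := by
          rw [hXdef]
          simp only
          rw [ergAvg_comm (fun z => hcommt t b z), ergAvg_comm (fun z => hcommt t a z)]
        have e2 : w t (c a) - c a = w a (c t) - c t := by
          have h3 := hkey a t
          rw [← neg_sub, h3, neg_sub]
        rw [e1, hXdef]
        simp only
        rw [← map_sub, ← map_sub, e2]
      rw [NormedAddCommGroup.tendsto_nhds_zero]
      intro ε hε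
      have hlim : Filter.Tendsto (fun n : ℕ => 2 * ‖c t‖ / n) Filter.atTop (𝓝 0) :=
        tendsto_const_div_atTop_nhds_zero_nat (2 * ‖c t‖)
      filter_upwards [Filter.eventually_ge_atTop 1, hlim.eventually (gt_mem_nhds hε)] with n hn1 hn2
      rw [hid n]
      calc ‖ergAvg (w b) n (ergAvg (w a) n (w a (c t) - c t))‖
          ≤ ‖ergAvg (w a) n (w a (c t) - c t)‖ := ergAvg_norm_le hisob hn1 _
      _ ≤ 2 * ‖c t‖ / n := ergAvg_tel_norm hisoa hn1 (c t)
      _ < ε := hn2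
    have := tendsto_nhds_unique h1 h2
    exact sub_eq_zero.mp this
  rw [hp0] at hXp
  exact hXp

end KeyLim

open Filter Topology

/-- Let `(w, K)` be a strongly continuous unitary representation of a real Hilbert space
`G` (as an additive group) on a complex Hilbert space `K` containing no nonzero invariant
vector, and `c : G → K` a continuous 1-cocycle (`c(r+s) = c(r) + w(r)c(s)`).  Then for all
`r, s`: `⟨c(r), w(r)c(s)⟩ = ⟨c(s), w(s)c(r)⟩` (inner ℂ products written here in the
Mathlib convention, conjugate-linear in the first variable). -/
theorem cocycle_symmetry
    {G : Type*} [NormedAddCommGroup G] [InnerProductSpace ℝ G] [CompleteSpace G]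
    {K : Type*} [NormedAddCommGroup K] [InnerProductSpace ℂ K] [CompleteSpace K]
    (w : G → K →L[ℂ] K)
    (hw0 : w 0 = 1)
    (hwadd : ∀ r s : G, w (r + s) = w r ∘L w s)
    (hwunitary : ∀ r : G, (adjoint (w r)) ∘L w r = 1 ∧ w r ∘L (adjoint (w r)) = 1)
    (hwcont : ∀ f : K, Continuous fun r => w r f)
    (hnotriv : ∀ f : K, (∀ r : G, w r f = f) → f = 0)
    (c : G → K) (hccont : Continuous c)
    (hccoc : ∀ r s : G, c (r + s) = c r + w r (c s)) :
    ∀ r s : G, (inner ℂ (w r (c s)) (c r) : ℂ) = inner ℂ (w s (c r)) (c s) := by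
  intro r s
  have h1r := (hwunitary r).1
  have h1s := (hwunitary s).1
  have hkey : ∀ t u : G, c t - w u (c t) = c u - w t (c u) := by
    intro t u
    rw [sub_eq_sub_iff_add_eq_add, ← hccoc t u, ← hccoc u t, add_comm t u]
  have hcommt : ∀ t u : G, ∀ z : K, w t (w u z) = w u (w t z) := by
    intro t u z
    rw [← ContinuousLinearMap.comp_apply, ← ContinuousLinearMap.comp_apply, ← hwadd, ← hwadd,
      add_comm t u]
  have hpow : ∀ (t : G) (k : ℕ), w (k • t) = w t ^ k := by
    intro t k
    induction k with
    | zero => simpa using hw0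
    | succ k ih => rw [succ_nsmul, hwadd, ih, pow_succ]; rfl
  have hT : ∀ (a b : G) (n : ℕ) (z : K), ergAvg (w b) n (ergAvg (w a) n z)
      = ((n:ℂ)⁻¹ * (n:ℂ)⁻¹) • ∑ j ∈ Finset.range n, ∑ k ∈ Finset.range n, w (j • a + k • b) z := by
    intro a b n z
    rw [ergAvg_apply (w a) n z, map_smul, ergAvg_apply (w b) n _, smul_smul]
    congr 1
    rw [Finset.sum_comm]
    refine Finset.sum_congr rfl fun k _ => ?_
    rw [map_sum]
    refine Finset.sum_congr rfl fun j _ => ?_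
    rw [← hpow, ← hpow, ← ContinuousLinearMap.comp_apply, ← hwadd, add_comm (k • b) (j • a)]
  set F : ℕ → K := fun n =>
    ((n : ℂ)⁻¹ * (n:ℂ)⁻¹) • ∑ j ∈ Finset.range n, ∑ k ∈ Finset.range n, c (j • r + k • s)
    with hFdef
  have hcob : ∀ (t : G) (n : ℕ),
      F n - w t (F n) = ((n:ℂ)⁻¹ * (n:ℂ)⁻¹) • ∑ j ∈ Finset.range n, ∑ k ∈ Finset.range n,
        (c t - w (j • r + k • s) (c t)) := by
    intro t n
    rw [hFdef]
    simp only
    rw [map_smul, ← smul_sub]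
    congr 1
    rw [map_sum, ← Finset.sum_sub_distrib]
    refine Finset.sum_congr rfl fun j _ => ?_
    rw [map_sum, ← Finset.sum_sub_distrib]
    exact Finset.sum_congr rfl fun k _ => hkey _ t
  have hconst : ∀ (n : ℕ), 1 ≤ n → ∀ v : K,
      ((n : ℂ)⁻¹ * (n:ℂ)⁻¹) • ∑ _j ∈ Finset.range n, ∑ _k ∈ Finset.range n, v = v := by
    intro n hn v
    have hn0 : ((n:ℂ)) ≠ 0 := Nat.cast_ne_zero.mpr (by omega)
    simp only [Finset.sum_const, Finset.card_range]
    rw [← Nat.cast_smul_eq_nsmul ℂ, ← Nat.cast_smul_eq_nsmul ℂ, smul_smul, smul_smul]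
    rw [show (n:ℂ)⁻¹ * (n:ℂ)⁻¹ * (n:ℂ) * (n:ℂ) = 1 from by field_simp, one_smul]
  have hsumswap : ∀ (n : ℕ) (z : K),
      ∑ j ∈ Finset.range n, ∑ k ∈ Finset.range n, w (j • s + k • r) z
        = ∑ j ∈ Finset.range n, ∑ k ∈ Finset.range n, w (j • r + k • s) z := by
    intro n z
    rw [Finset.sum_comm]
    exact Finset.sum_congr rfl fun j _ => Finset.sum_congr rfl fun k _ => by rw [add_comm]
  have hg : ∀ n : ℕ, 1 ≤ n →
      c r - ergAvg (w s) n (ergAvg (w r) n (c r)) = F n - w r (F n) := by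
    intro n hn
    rw [hcob r n, hT r s n (c r)]
    simp only [Finset.sum_sub_distrib]
    rw [smul_sub, hconst n hn (c r)]
  have hh : ∀ n : ℕ, 1 ≤ n →
      c s - ergAvg (w r) n (ergAvg (w s) n (c s)) = F n - w s (F n) := by
    intro n hn
    rw [hcob s n, hT s r n (c s), hsumswap n (c s)]
    simp only [Finset.sum_sub_distrib]
    rw [smul_sub, hconst n hn (c s)]
  have hgl : Tendsto (fun n => c r - ergAvg (w s) n (ergAvg (w r) n (c r))) atTop (𝓝 (c r)) := by
    have h := keylim w hw0 hwadd hwunitary hnotriv c hccoc r s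
    simpa using tendsto_const_nhds.sub h
  have hhl : Tendsto (fun n => c s - ergAvg (w r) n (ergAvg (w s) n (c s))) atTop (𝓝 (c s)) := by
    have h := keylim w hw0 hwadd hwunitary hnotriv c hccoc s r
    simpa using tendsto_const_nhds.sub h
  have t1 : Tendsto (fun n =>
      (inner ℂ (w r (c s - ergAvg (w r) n (ergAvg (w s) n (c s))))
        (c r - ergAvg (w s) n (ergAvg (w r) n (c r))) : ℂ)) atTop
      (𝓝 (inner ℂ (w r (c s)) (c r))) :=
    Filter.Tendsto.inner (((w r).continuous.tendsto (c s)).comp hhl) hgl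
  have t2 : Tendsto (fun n =>
      (inner ℂ (w s (c r - ergAvg (w s) n (ergAvg (w r) n (c r))))
        (c s - ergAvg (w r) n (ergAvg (w s) n (c s))) : ℂ)) atTop
      (𝓝 (inner ℂ (w s (c r)) (c s))) :=
    Filter.Tendsto.inner (((w s).continuous.tendsto (c r)).comp hgl) hhl
  have heq : (fun n =>
      (inner ℂ (w r (c s - ergAvg (w r) n (ergAvg (w s) n (c s))))
        (c r - ergAvg (w s) n (ergAvg (w r) n (c r))) : ℂ)) =ᶠ[atTop] fun n =>
      (inner ℂ (w s (c r - ergAvg (w s) n (ergAvg (w r) n (c r))))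
        (c s - ergAvg (w r) n (ergAvg (w s) n (c s))) : ℂ) := by
    filter_upwards [eventually_ge_atTop 1] with n hn
    rw [hg n hn, hh n hn]
    exact claimB (w r) (w s) (hcommt r s) (unit_inner (w r) h1r) (unit_inner (w s) h1s) (F n)
  exact tendsto_nhds_unique (Filter.Tendsto.congr' heq t1) t2
end

section
/- Let ℋ be a real Hilbert space, K a complex Hilbert space, and ξ, η: ℋ → K bounded real-linear maps satisfying ⟨p1, p2⟩ = Im⟨η(p2), ξ(p1)⟩ for all p1, p2 ∈ ℋ. Then ξ and η are injective, ‖p‖ ≤ ‖η‖·‖ξ(p)‖ and ‖p‖ ≤ ‖ξ‖·‖η(p)‖ for all p ∈ ℋ, and the ranges of ξ and η are closed. -/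
/-- Let `ℋ` be a real Hilbert space, `K` a complex Hilbert space, and `ξ, η : ℋ → K`
bounded real-linear maps with `⟨p₁, p₂⟩ = Im⟨η(p₂), ξ(p₁)⟩` (paper convention; in
Mathlib's convention `⟨p₁,p₂⟩ = Im ⟪ξ p₁, η p₂⟫`).  Then `ξ` and `η` are injective,
`‖p‖ ≤ ‖η‖·‖ξ p‖`, `‖p‖ ≤ ‖ξ‖·‖η p‖`, and the ranges of `ξ` and `η` are closed. -/
theorem pairing_injective_closed_range
    {H : Type*} [NormedAddCommGroup H] [InnerProductSpace ℝ H] [CompleteSpace H]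
    {K : Type*} [NormedAddCommGroup K] [InnerProductSpace ℂ K] [CompleteSpace K]
    (ξ η : H →L[ℝ] K)
    (hpair : ∀ p₁ p₂ : H, (inner ℝ p₁ p₂ : ℝ) = (inner ℂ (ξ p₁) (η p₂) : ℂ).im) :
    Function.Injective ξ ∧ Function.Injective η ∧
    (∀ p : H, ‖p‖ ≤ ‖η‖ * ‖ξ p‖) ∧ (∀ p : H, ‖p‖ ≤ ‖ξ‖ * ‖η p‖) ∧
    IsClosed (Set.range ξ) ∧ IsClosed (Set.range η) := by
  have key : ∀ p : H, ‖p‖ ^ 2 ≤ ‖ξ p‖ * ‖η p‖ := by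
    intro p
    have h1 : ‖p‖ ^ 2 = (inner ℂ (ξ p) (η p) : ℂ).im := by
      rw [← hpair p p]; rw [← real_inner_self_eq_norm_sq]
    have h2 : (inner ℂ (ξ p) (η p) : ℂ).im ≤ ‖(inner ℂ (ξ p) (η p) : ℂ)‖ := by
      calc (inner ℂ (ξ p) (η p) : ℂ).im ≤ |(inner ℂ (ξ p) (η p) : ℂ).im| := le_abs_self _
        _ ≤ ‖(inner ℂ (ξ p) (η p) : ℂ)‖ := Complex.abs_im_le_norm _
    calc ‖p‖ ^ 2 ≤ ‖(inner ℂ (ξ p) (η p) : ℂ)‖ := h1 ▸ h2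
      _ ≤ ‖ξ p‖ * ‖η p‖ := norm_inner_le_norm _ _
  have hxi : ∀ p : H, ‖p‖ ≤ ‖η‖ * ‖ξ p‖ := by
    intro p
    rcases eq_or_ne p 0 with rfl | hp
    · simp
    · have hpos : 0 < ‖p‖ := norm_pos_iff.mpr hp
      have := key p
      have h2 : ‖η p‖ ≤ ‖η‖ * ‖p‖ := η.le_opNorm p
      nlinarith [norm_nonneg (ξ p)]
  have heta : ∀ p : H, ‖p‖ ≤ ‖ξ‖ * ‖η p‖ := by
    intro p
    rcases eq_or_ne p 0 with rfl | hp
    · simp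
    · have hpos : 0 < ‖p‖ := norm_pos_iff.mpr hp
      have := key p
      have h2 : ‖ξ p‖ ≤ ‖ξ‖ * ‖p‖ := ξ.le_opNorm p
      nlinarith [norm_nonneg (η p)]
  have hainj : Function.Injective ξ := by
    intro a b h
    have := hxi (a - b)
    rw [map_sub, h, sub_self] at this
    rw [← sub_eq_zero]; simpa using this
  have hbinj : Function.Injective η := by
    intro a b h
    have := heta (a - b)
    rw [map_sub, h, sub_self] at this
    rw [← sub_eq_zero]; simpa using this
  have hanti : AntilipschitzWith ‖η‖₊ ξ := by
    intro a b
    simp only [edist_nndist, ← ENNReal.coe_mul, ENNReal.coe_le_coe, ← NNReal.coe_le_coe,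
      NNReal.coe_mul, coe_nndist, dist_eq_norm]
    calc ‖a - b‖ ≤ ‖η‖ * ‖ξ (a - b)‖ := hxi _
      _ = ‖η‖ * ‖ξ a - ξ b‖ := by rw [map_sub]
  have hanti' : AntilipschitzWith ‖ξ‖₊ η := by
    intro a b
    simp only [edist_nndist, ← ENNReal.coe_mul, ENNReal.coe_le_coe, ← NNReal.coe_le_coe,
      NNReal.coe_mul, coe_nndist, dist_eq_norm]
    calc ‖a - b‖ ≤ ‖ξ‖ * ‖η (a - b)‖ := heta _
      _ = ‖ξ‖ * ‖η a - η b‖ := by rw [map_sub]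
  exact ⟨hainj, hbinj, hxi, heta,
    hanti.isClosed_range ξ.uniformContinuous,
    hanti'.isClosed_range η.uniformContinuous⟩
end

section
/- Let w be a strongly continuous unitary representation of a real Hilbert space G (additive group) on a complex Hilbert space K without nonzero invariant vectors, and c: G → K a continuous 1-cocycle (c(r+s) = c(r) + w(r)c(s)). Fix r, s ∈ G and let G_0 = span{r, s}, K_0 = {f ∈ K : w(g)f = f for all g ∈ G_0}. Then the K_0-component c_0 of c (the orthogonal projection of c(g) onto K_0) vanishes on G_0: c_0(h) = 0 for all h ∈ G_0. -/
open ContinuousLinearMap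

/-- Let `w` be a strongly continuous unitary representation of a real Hilbert space `G`
(additive group) on a complex Hilbert space `K` with no nonzero invariant vectors, and
`c : G → K` a continuous 1-cocycle.  Fix `r, s ∈ G`, let `G₀ = span_ℝ{r,s}` and
`K₀ = {f : w(g)f = f for all g ∈ G₀}`.  Then the `K₀`-component of `c` vanishes on `G₀`:
for every `h ∈ G₀`, `c(h)` is orthogonal to `K₀` (i.e. the orthogonal projection of
`c(h)` onto `K₀` is zero). -/
theorem cocycle_invariant_component_vanishes
    {G : Type*} [NormedAddCommGroup G] [InnerProductSpace ℝ G] [CompleteSpace G]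
    {K : Type*} [NormedAddCommGroup K] [InnerProductSpace ℂ K] [CompleteSpace K]
    (w : G → K →L[ℂ] K)
    (hw0 : w 0 = 1)
    (hwadd : ∀ r s : G, w (r + s) = w r ∘L w s)
    (hwunitary : ∀ r : G, (adjoint (w r)) ∘L w r = 1 ∧ w r ∘L (adjoint (w r)) = 1)
    (hwcont : ∀ f : K, Continuous fun r => w r f)
    (hnotriv : ∀ f : K, (∀ r : G, w r f = f) → f = 0)
    (c : G → K) (hccont : Continuous c)
    (hccoc : ∀ r s : G, c (r + s) = c r + w r (c s)) :
    ∀ r s : G, ∀ h ∈ Submodule.span ℝ ({r, s} : Set G),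
      ∀ f : K, (∀ g ∈ Submodule.span ℝ ({r, s} : Set G), w g f = f) →
        (inner ℂ (c h) f : ℂ) = 0 := by
  intro r s h hh f hf
  letI : InnerProductSpace ℝ K := InnerProductSpace.complexToReal
  have hinv : ∀ g : G, w g ∘L w (-g) = 1 := by
    intro g; rw [← hwadd]; simp [hw0]
  have hadj : ∀ g : G, adjoint (w g) = w (-g) := by
    intro g
    calc adjoint (w g) = adjoint (w g) ∘L (w g ∘L w (-g)) := by rw [hinv]; ext x; simp
    _ = (adjoint (w g) ∘L w g) ∘L w (-g) := by rw [comp_assoc]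
    _ = w (-g) := by rw [(hwunitary g).1]; ext x; simp
  have hadj' : ∀ g : G, w g = adjoint (w (-g)) := by
    intro g; rw [hadj, neg_neg]
  have hnorm : ∀ (g : G) (x : K), ‖w g x‖ = ‖x‖ := by
    intro g x
    have h1 : (inner ℂ (w g x) (w g x) : ℂ) = inner ℂ x x := by
      rw [← adjoint_inner_right, ← comp_apply, (hwunitary g).1, ContinuousLinearMap.one_apply]
    have h2 : ‖w g x‖ ^ 2 = ‖x‖ ^ 2 := by
      rw [inner_self_eq_norm_sq_to_K, inner_self_eq_norm_sq_to_K] at h1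
      exact_mod_cast h1
    have := norm_nonneg (w g x); have := norm_nonneg x
    nlinarith
  -- key2 : ⟨w g (c h), f⟩ = ⟨c h, f⟩
  have key2 : ∀ g : G, (inner ℂ (w g (c h)) f : ℂ) = inner ℂ (c h) f := by
    intro g
    have e : c h + w h (c g) = c g + w g (c h) := by
      rw [← hccoc, ← hccoc, add_comm g h]
    have e2 : (inner ℂ (c h) f : ℂ) + inner ℂ (w h (c g)) f
        = inner ℂ (c g) f + inner ℂ (w g (c h)) f := by
      rw [← inner_add_left, ← inner_add_left, e]
    have e3 : (inner ℂ (w h (c g)) f : ℂ) = inner ℂ (c g) f := by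
      rw [hadj' h, adjoint_inner_left, hf (-h) (neg_mem hh)]
    rw [e3] at e2
    linear_combination -e2
  -- key : ⟨c h, w g f⟩ = ⟨c h, f⟩
  have key : ∀ g : G, (inner ℂ (c h) (w g f) : ℂ) = inner ℂ (c h) f := by
    intro g
    rw [hadj' g, adjoint_inner_right, key2]
  -- the closed convex hull of the orbit of f
  set O : Set K := Set.range (fun g : G => w g f) with hO
  set C : Set K := closure (convexHull ℝ O) with hC
  have hfO : f ∈ O := ⟨0, by simp [hw0]⟩
  have hCne : C.Nonempty := ⟨f, subset_closure (subset_convexHull ℝ O hfO)⟩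
  have hCconv : Convex ℝ C := (convex_convexHull ℝ O).closure
  have hCclosed : IsClosed C := isClosed_closure
  -- C is invariant under each w g
  have hCinv : ∀ (g : G), ∀ x ∈ C, w g x ∈ C := by
    intro g x hx
    have h1 : (w g) '' (convexHull ℝ O) ⊆ convexHull ℝ O := by
      rw [Set.image_subset_iff]
      apply convexHull_min
      · intro y hy
        apply subset_convexHull
        obtain ⟨g', rfl⟩ := hy
        exact ⟨g + g', by simp [hwadd, comp_apply]⟩
      · exact (convex_convexHull ℝ O).linear_preimage
          (((w g).restrictScalars ℝ).toLinearMap)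
    have h2 : w g x ∈ closure ((w g) '' (convexHull ℝ O)) :=
      image_closure_subset_closure_image (w g).continuous ⟨x, hx, rfl⟩
    exact closure_mono h1 h2
  -- minimal norm element
  obtain ⟨v, hvC, hvmin⟩ := exists_norm_eq_iInf_of_complete_convex hCne
    (hCclosed.isComplete) hCconv 0
  have hd : ∀ x ∈ C, ‖v‖ ≤ ‖x‖ := by
    intro x hx
    have : ‖(0:K) - v‖ ≤ ‖(0:K) - x‖ := by
      rw [hvmin]
      exact ciInf_le ⟨0, fun y ⟨z, hz⟩ => hz ▸ norm_nonneg _⟩ (⟨x, hx⟩ : C)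
    simpa using this
  -- v is invariant
  have hvinv : ∀ g : G, w g v = v := by
    intro g
    set u := w g v with hu
    have hgvC : u ∈ C := hCinv g v hvC
    have hgvn : ‖u‖ = ‖v‖ := hnorm g v
    have hmidC : (1/2 : ℝ) • v + (1/2 : ℝ) • u ∈ C :=
      hCconv hvC hgvC (by norm_num) (by norm_num) (by norm_num)
    have hmn : ‖v‖ ≤ (1/2 : ℝ) * ‖v + u‖ := by
      have := hd _ hmidC
      rwa [← smul_add, norm_smul, Real.norm_eq_abs, abs_of_pos (by norm_num : (0:ℝ) < 1/2)]
        at this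
    have hp := parallelogram_law_with_norm ℂ v u
    have hz2 : ‖v - u‖ * ‖v - u‖ ≤ 0 := by nlinarith [norm_nonneg v, norm_nonneg (v + u)]
    have hz : v - u = 0 :=
      norm_eq_zero.mp (mul_self_eq_zero.mp (le_antisymm hz2 (mul_self_nonneg _)))
    exact (sub_eq_zero.mp hz).symm
  have hv0 : v = 0 := hnotriv v hvinv
  -- ⟨c h, ·⟩ is constant on C
  have hconst : ∀ x ∈ C, (inner ℂ (c h) x : ℂ) = inner ℂ (c h) f := by
    intro x hx
    set L : K →ₗ[ℝ] ℂ := ((innerSL ℂ (c h)).restrictScalars ℝ).toLinearMap with hL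
    have hS : C ⊆ L ⁻¹' {(inner ℂ (c h) f : ℂ)} := by
      apply closure_minimal
      · apply convexHull_min
        · rintro y ⟨g, rfl⟩
          simpa [hL] using key g
        · exact (convex_singleton _).linear_preimage L
      · exact (isClosed_singleton).preimage ((innerSL ℂ (c h)).restrictScalars ℝ).continuous
    simpa [hL] using hS hx
  have hfin := hconst v hvC
  rw [hv0] at hfin
  simpa using hfin.symm
end
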